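/- For every ε > 0 there exists a constant C > 0 such that the following holds: for every prime p and all finite nonempty sets A, B ⊆ F_p with 0 ∉ A and 0 ∉ B, there exists G ⊆ A × B with |G| ≥ (1 − ε)·|A|·|B| such that |A −_G B| ≤ C · |A·(B+1)| · |B·(A+1)| · |A/B| / (|A|·|B|). -/

import Mathlib

theorem stmt7 :
    ∀ ε : ℝ, 0 < ε → ∃ C : ℝ, 0 < C ∧
      ∀ (p : ℕ) [Fact p.Prime],
        ∀ A B : Finset (ZMod p), A.Nonempty → B.Nonempty →
          (0 : ZMod p) ∉ A → (0 : ZMod p) ∉ B →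
          ∃ G ⊆ A ×ˢ B, (1 - ε) * (A.card : ℝ) * (B.card : ℝ) ≤ (G.card : ℝ) ∧
            ((G.image fun x => x.1 - x.2).card : ℝ) ≤
              C * (((A ×ˢ B).image fun x => x.1 * (x.2 + 1)).card : ℝ) *
                (((A ×ˢ B).image fun x => x.2 * (x.1 + 1)).card : ℝ) *
                (((A ×ˢ B).image fun x => x.1 / x.2).card : ℝ) /
                ((A.card : ℝ) * (B.card : ℝ)) := by
  intro ε hε
  refine ⟨1/ε, by positivity, ?_⟩
  intro p _ A B hA hB hA0 hB0
  classical
  set r : ZMod p → ℕ := fun q => ((A ×ˢ B).filter fun x => x.1 / x.2 = q).card with hr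
  set Q := (A ×ˢ B).image fun x => x.1 / x.2 with hQdef
  have hApos : (0:ℝ) < A.card := by exact_mod_cast Finset.card_pos.2 hA
  have hBpos : (0:ℝ) < B.card := by exact_mod_cast Finset.card_pos.2 hB
  have hQne : Q.Nonempty := (hA.product hB).image _
  have hQpos : (0:ℝ) < Q.card := by exact_mod_cast Finset.card_pos.2 hQne
  set θ : ℝ := ε * A.card * B.card / Q.card with hθ
  have hθpos : 0 < θ := by positivity
  set G := (A ×ˢ B).filter (fun x => θ ≤ (r (x.1 / x.2) : ℝ)) with hGdef
  refine ⟨G, Finset.filter_subset _ _, ?_, ?_⟩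
  · -- G is large
    set bad := (A ×ˢ B).filter (fun x => ¬ θ ≤ (r (x.1 / x.2) : ℝ)) with hbad
    have hsplit : G.card + bad.card = (A ×ˢ B).card :=
      Finset.card_filter_add_card_filter_not _
    set Qbad := Q.filter (fun q => ¬ θ ≤ (r q : ℝ)) with hQbad
    have hfib : bad.card = ∑ q ∈ Qbad, (bad.filter fun x => x.1/x.2 = q).card := by
      apply Finset.card_eq_sum_card_fiberwise
      intro x hx
      rw [hbad, Finset.mem_coe, Finset.mem_filter] at hx
      rw [Finset.mem_coe, hQbad, Finset.mem_filter]
      exact ⟨Finset.mem_image_of_mem _ hx.1, hx.2⟩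
    have hbadle : (bad.card : ℝ) ≤ ε * A.card * B.card := by
      have h1 : (bad.card : ℝ) ≤ ∑ q ∈ Qbad, θ := by
        rw [hfib]
        push_cast
        apply Finset.sum_le_sum
        intro q hq
        rw [hQbad, Finset.mem_filter] at hq
        have h2 : (bad.filter fun x => x.1/x.2 = q).card ≤ r q := by
          apply Finset.card_le_card
          intro x hx
          rw [Finset.mem_filter] at hx ⊢
          rw [hbad, Finset.mem_filter] at hx
          exact ⟨hx.1.1, hx.2⟩
        have h3 := not_le.1 hq.2
        exact le_of_lt (lt_of_le_of_lt (by exact_mod_cast h2) h3)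
      have h3 : ∑ q ∈ Qbad, θ = Qbad.card * θ := by
        rw [Finset.sum_const, nsmul_eq_mul]
      have h4 : (Qbad.card : ℝ) ≤ Q.card := by
        exact_mod_cast Finset.card_le_card (Finset.filter_subset _ _)
      calc (bad.card : ℝ) ≤ Qbad.card * θ := by rw [← h3]; exact h1
        _ ≤ Q.card * θ := by nlinarith [hθpos]
        _ = ε * A.card * B.card := by
            rw [hθ, mul_comm]
            exact div_mul_cancel₀ _ (ne_of_gt hQpos)
    have hGcard : (G.card : ℝ) = ((A ×ˢ B).card : ℝ) - bad.card := by
      have h := hsplit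
      have : (G.card : ℝ) + bad.card = (A ×ˢ B).card := by exact_mod_cast h
      linarith
    rw [hGcard, Finset.card_product]
    push_cast
    nlinarith [hbadle]
  · -- the difference set is small
    set X := (A ×ˢ B).image fun x : ZMod p × ZMod p => x.1 * (x.2 + 1) with hX
    set Y := (A ×ˢ B).image fun x : ZMod p × ZMod p => x.2 * (x.1 + 1) with hY
    set D := G.image fun x : ZMod p × ZMod p => x.1 - x.2 with hD
    have hw : ∀ d, d ∈ D → ∃ x : ZMod p × ZMod p, x ∈ G ∧ x.1 - x.2 = d := by
      intro d hd
      rw [hD, Finset.mem_image] at hd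
      obtain ⟨x, hx, hxd⟩ := hd
      exact ⟨x, hx, hxd⟩
    choose! w hwG hwd using hw
    have hwfacts : ∀ d ∈ D, (w d).1 ∈ A ∧ (w d).2 ∈ B ∧
        θ ≤ (r ((w d).1 / (w d).2) : ℝ) := by
      intro d hd
      have h := hwG d hd
      rw [hGdef, Finset.mem_filter, Finset.mem_product] at h
      exact ⟨h.1.1, h.1.2, h.2⟩
    set fib : ZMod p → Finset (ZMod p × ZMod p) :=
      fun d => (A ×ˢ B).filter (fun x => x.1 / x.2 = (w d).1 / (w d).2) with hfibdef
    set Φ : ZMod p → ZMod p × ZMod p → ZMod p × ZMod p :=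
      fun d x => ((w d).1 * (x.2 + 1), (w d).2 * (x.1 + 1)) with hΦ
    -- difference recovery
    have hdiff : ∀ d ∈ D, ∀ x ∈ fib d, (Φ d x).1 - (Φ d x).2 = d := by
      intro d hd x hx
      obtain ⟨ha, hb, -⟩ := hwfacts d hd
      rw [hfibdef, Finset.mem_filter, Finset.mem_product] at hx
      have hbne : (w d).2 ≠ 0 := fun h => hB0 (h ▸ hb)
      have hx2ne : x.2 ≠ 0 := fun h => hB0 (h ▸ hx.1.2)
      have hratio : x.1 * (w d).2 = (w d).1 * x.2 := by
        have h := hx.2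
        field_simp at h
        linear_combination h
      have hd' : (w d).1 - (w d).2 = d := hwd d hd
      simp only [hΦ]
      linear_combination hd' - hratio
    -- injectivity on fibers
    have hinj : ∀ d ∈ D, Set.InjOn (Φ d) (fib d) := by
      intro d hd x hx y hy hxy
      obtain ⟨ha, hb, -⟩ := hwfacts d hd
      have hane : (w d).1 ≠ 0 := fun h => hA0 (h ▸ ha)
      have hbne : (w d).2 ≠ 0 := fun h => hB0 (h ▸ hb)
      simp only [hΦ, Prod.mk.injEq] at hxy
      have h1 : x.2 = y.2 := by
        have h := mul_left_cancel₀ hane hxy.1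
        exact add_right_cancel h
      have h2 : x.1 = y.1 := by
        have h := mul_left_cancel₀ hbne hxy.2
        exact add_right_cancel h
      exact Prod.ext h2 h1
    -- images land in X ×ˢ Y
    have himg : ∀ d ∈ D, (fib d).image (Φ d) ⊆ X ×ˢ Y := by
      intro d hd y hy
      obtain ⟨ha, hb, -⟩ := hwfacts d hd
      rw [Finset.mem_image] at hy
      obtain ⟨x, hx, hxy⟩ := hy
      rw [hfibdef, Finset.mem_filter, Finset.mem_product] at hx
      rw [Finset.mem_product, ← hxy]
      constructor
      · exact Finset.mem_image.2 ⟨((w d).1, x.2),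
          Finset.mem_product.2 ⟨ha, hx.1.2⟩, rfl⟩
      · exact Finset.mem_image.2 ⟨(x.1, (w d).2),
          Finset.mem_product.2 ⟨hx.1.1, hb⟩, rfl⟩
    -- the biUnion
    set U := D.biUnion (fun d => (fib d).image (Φ d)) with hU
    have hUsub : U ⊆ X ×ˢ Y := by
      rw [hU]
      exact Finset.biUnion_subset.2 himg
    have hdisj : ∀ d ∈ D, ∀ d' ∈ D, d ≠ d' →
        Disjoint ((fib d).image (Φ d)) ((fib d').image (Φ d')) := by
      intro d hd d' hd' hne
      rw [Finset.disjoint_left]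
      intro y hy hy'
      rw [Finset.mem_image] at hy hy'
      obtain ⟨x, hx, hxy⟩ := hy
      obtain ⟨x', hx', hxy'⟩ := hy'
      apply hne
      rw [← hdiff d hd x hx, ← hdiff d' hd' x' hx', hxy, hxy']
    have hUcard : U.card = ∑ d ∈ D, ((fib d).image (Φ d)).card :=
      Finset.card_biUnion hdisj
    have hfibcard : ∀ d ∈ D, ((fib d).image (Φ d)).card = (fib d).card := by
      intro d hd
      exact Finset.card_image_of_injOn (hinj d hd)
    have hfibr : ∀ d ∈ D, (fib d).card = r ((w d).1 / (w d).2) := fun d hd => rfl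
    have hlb : (D.card : ℝ) * θ ≤ U.card := by
      rw [hUcard]
      push_cast
      calc (D.card : ℝ) * θ = ∑ _d ∈ D, θ := by
            rw [Finset.sum_const, nsmul_eq_mul]
        _ ≤ ∑ d ∈ D, (((fib d).image (Φ d)).card : ℝ) := by
            apply Finset.sum_le_sum
            intro d hd
            rw [hfibcard d hd, hfibr d hd]
            exact (hwfacts d hd).2.2
    have hub : (U.card : ℝ) ≤ (X.card : ℝ) * Y.card := by
      have h := Finset.card_le_card hUsub
      rw [Finset.card_product] at h
      exact_mod_cast h
    have hDle : (D.card : ℝ) * θ ≤ (X.card : ℝ) * Y.card := le_trans hlb hub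
    have h1 : (D.card : ℝ) ≤ (X.card : ℝ) * Y.card / θ := by
      rw [le_div_iff₀ hθpos]; exact hDle
    have h2 : (X.card : ℝ) * Y.card / θ
        = 1/ε * X.card * Y.card * Q.card / (A.card * B.card) := by
      rw [hθ, div_div_eq_mul_div]; ring
    exact h1.trans_eq h2
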